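/- In the set-cover reduction graph G, any set cover S of (U,𝔉) gives a (λ,k)-FT-BFP H of G in which each sink v_j has in-degree exactly λ(|S| + k): H keeps all edges of G except that the in-edges of each v_j are restricted to those from A = ⋃_{i=1}^λ ({y_{i,W} : W ∈ S} ∪ Z_i). -/

import Mathlib

open Finset

/-- `p` is a nonempty directed path/walk (as a list of edges) from `s` to `t`
using only edges of `G`. -/
def IsPath {V : Type*} (G : Finset (V × V)) (s t : V) (p : List (V × V)) : Prop :=
  p ≠ [] ∧ (∀ e ∈ p, e ∈ G) ∧ List.Chain' (fun e f => e.2 = f.1) p ∧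
    p.head?.map Prod.fst = some s ∧ p.getLast?.map Prod.snd = some t

/-- `G` contains `r` pairwise edge-disjoint paths from `s` to `t` (unit capacities). -/
def EDP {V : Type*} (G : Finset (V × V)) (s t : V) (r : ℕ) : Prop :=
  ∃ ps : Fin r → List (V × V), (∀ i, IsPath G s t (ps i)) ∧
    ∀ i j, i ≠ j → ∀ e, e ∈ ps i → e ∉ ps j

/-- Max-flow with unit capacities: the maximum number of edge-disjoint `s`-`t` paths. -/
noncomputable def maxFlow {V : Type*} (G : Finset (V × V)) (s t : V) : ℕ :=
  sSup {r | EDP G s t r}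

/-- Directed reachability in the edge set `G`. -/
def Reach {V : Type*} (G : Finset (V × V)) (s t : V) : Prop :=
  Relation.ReflTransGen (fun a b => (a, b) ∈ G) s t

def inEdges {V : Type*} [DecidableEq V] (G : Finset (V × V)) (v : V) : Finset (V × V) :=
  G.filter fun e => e.2 = v

def outDeg {V : Type*} [DecidableEq V] (G : Finset (V × V)) (v : V) : ℕ :=
  (G.filter fun e => e.1 = v).card

/-- `H` is a `(lam, k)` fault-tolerant bounded-flow-preserver of `G` w.r.t. source `s`:
for every set `F` of at most `k` failed edges and every vertex `t`, the `s`-`t` max-flow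
of `H \ F` equals that of `G \ F` whenever the latter is at most `lam`, and is at least
`lam` otherwise. -/
def IsFTBFP {V : Type*} [DecidableEq V] (G H : Finset (V × V)) (s : V) (lam k : ℕ) : Prop :=
  H ⊆ G ∧ ∀ F : Finset (V × V), F.card ≤ k → ∀ t : V,
    (maxFlow (G \ F) s t ≤ lam → maxFlow (H \ F) s t = maxFlow (G \ F) s t) ∧
    (lam < maxFlow (G \ F) s t → lam ≤ maxFlow (H \ F) s t)

/-- `H` is a `j`-fault-tolerant reachability subgraph of `G` w.r.t. source `s`. -/
def IsFTRS {V : Type*} [DecidableEq V] (G H : Finset (V × V)) (s : V) (j : ℕ) : Prop :=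
  H ⊆ G ∧ ∀ F : Finset (V × V), F.card ≤ j → ∀ t : V,
    (Reach (H \ F) s t ↔ Reach (G \ F) s t)

def IsCut {V : Type*} (A : Finset V) (s t : V) : Prop := s ∈ A ∧ t ∉ A

/-- Number of edges of `G` from `A` to its complement. -/
def cutVal {V : Type*} [DecidableEq V] (G : Finset (V × V)) (A : Finset V) : ℕ :=
  (G.filter fun e => e.1 ∈ A ∧ e.2 ∉ A).card

def IsMinCut {V : Type*} [DecidableEq V] (G : Finset (V × V)) (s t : V) (A : Finset V) : Prop :=
  IsCut A s t ∧ ∀ B : Finset V, IsCut B s t → cutVal G A ≤ cutVal G B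

def IsCutS {V : Type*} (S : Finset V) (t : V) (A : Finset V) : Prop := S ⊆ A ∧ t ∉ A

def IsMinCutS {V : Type*} [DecidableEq V] (G : Finset (V × V)) (S : Finset V) (t : V)
    (A : Finset V) : Prop :=
  IsCutS S t A ∧ ∀ B : Finset V, IsCutS S t B → cutVal G A ≤ cutVal G B

/-- Farthest min-cut: the min-cut whose source side contains the source side of
every min-cut. -/
def IsFMC {V : Type*} [DecidableEq V] (G : Finset (V × V)) (S : Finset V) (t : V)
    (A : Finset V) : Prop :=
  IsMinCutS G S t A ∧ ∀ B : Finset V, IsMinCutS G S t B → B ⊆ A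

/-- Vertices outside `A` with an in-edge from `A`. -/
def outSet {V : Type*} [DecidableEq V] (G : Finset (V × V)) (A : Finset V) : Finset V :=
  (G.filter fun e => e.1 ∈ A ∧ e.2 ∉ A).image Prod.snd

open scoped Classical

/-- Vertices of the set-cover reduction graph: the source `s`; the nodes of `lam`
disjoint complete binary trees of height `u` (heap-indexed, leaves correspond to the
elements of `U`); the vertices `ℓ(x_i)` (`false`) and `r(x_i)` (`true`); the set
vertices `y_{i,W}` (`W` indexed by `ι`); the `u+1` vertices of each `Z_i`; and the
`N` sink vertices `v_1, …, v_N`. -/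
abbrev SCV (lam u N : ℕ) (U ι : Type*) :=
  Unit ⊕ (Fin lam × Fin (2 ^ (u + 1) - 1)) ⊕ (Fin lam × U × Bool) ⊕ (Fin lam × ι) ⊕
    (Fin lam × Fin (u + 1)) ⊕ Fin N

variable {lam u N : ℕ} {U ι : Type*}

def yV (i : Fin lam) (w : ι) : SCV lam u N U ι :=
  Sum.inr (Sum.inr (Sum.inr (Sum.inl (i, w))))

def zV (i : Fin lam) (c : Fin (u + 1)) : SCV lam u N U ι :=
  Sum.inr (Sum.inr (Sum.inr (Sum.inr (Sum.inl (i, c)))))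

def sinkV (j : Fin N) : SCV lam u N U ι :=
  Sum.inr (Sum.inr (Sum.inr (Sum.inr (Sum.inr j))))

/-- Edges of the set-cover reduction graph (sets `Sw : ι → Finset U`, the bijection
`elem` identifies the `2^u` heap leaves with the elements of `U`): `s → r_i`; the
tree edges; each leaf `x_i` to `ℓ(x_i)` and `r(x_i)`; `ℓ(x_i) → y_{i,W}` iff
`x ∈ W`; `r(x_i) → Z_i` (all of it); and every vertex of `Y_i ∪ Z_i` to every
sink `v_j`. -/
def scEdge (lam u N : ℕ) (U ι : Type*) (Sw : ι → Finset U) (elem : Fin (2 ^ u) ≃ U) :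
    SCV lam u N U ι × SCV lam u N U ι → Prop := fun e =>
  match e with
  | (Sum.inl _, Sum.inr (Sum.inl (_, a))) => (a : ℕ) = 0
  | (Sum.inr (Sum.inl (i, a)), Sum.inr (Sum.inl (i2, b))) =>
      i = i2 ∧ ((b : ℕ) = 2 * (a : ℕ) + 1 ∨ (b : ℕ) = 2 * (a : ℕ) + 2)
  | (Sum.inr (Sum.inl (i, a)), Sum.inr (Sum.inr (Sum.inl (i2, x, _)))) =>
      i = i2 ∧ ∃ j : Fin (2 ^ u), (a : ℕ) = 2 ^ u - 1 + (j : ℕ) ∧ elem j = x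
  | (Sum.inr (Sum.inr (Sum.inl (i, x, false))), Sum.inr (Sum.inr (Sum.inr (Sum.inl (i2, w))))) =>
      i = i2 ∧ x ∈ Sw w
  | (Sum.inr (Sum.inr (Sum.inl (i, _, true))), Sum.inr (Sum.inr (Sum.inr (Sum.inr (Sum.inl (i2, _)))))) =>
      i = i2
  | (Sum.inr (Sum.inr (Sum.inr (Sum.inl _))), Sum.inr (Sum.inr (Sum.inr (Sum.inr (Sum.inr _))))) =>
      True
  | (Sum.inr (Sum.inr (Sum.inr (Sum.inr (Sum.inl _)))), Sum.inr (Sum.inr (Sum.inr (Sum.inr (Sum.inr _))))) =>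
      True
  | _ => False

noncomputable def scGraph (lam u N : ℕ) (U ι : Type*) [Fintype U] [Fintype ι]
    (Sw : ι → Finset U) (elem : Fin (2 ^ u) ≃ U) :
    Finset (SCV lam u N U ι × SCV lam u N U ι) :=
  Finset.univ.filter (scEdge lam u N U ι Sw elem)



namespace SC17
set_option linter.unusedSectionVars false


def bitv (b : Bool) : ℕ := cond b 1 0

lemma bitv_le_one (b : Bool) : bitv b ≤ 1 := by cases b <;> simp [bitv]

def allLists : ℕ → Finset (List Bool)
  | 0 => {[]}
  | n+1 => (allLists n).image (List.cons false) ∪ (allLists n).image (List.cons true)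

lemma mem_allLists : ∀ (n : ℕ) (l : List Bool), l ∈ allLists n ↔ l.length = n := by
  intro n
  induction n with
  | zero => intro l; simp [allLists, List.length_eq_zero_iff]
  | succ n ih =>
    intro l
    cases l with
    | nil => simp [allLists, ih]
    | cons b t =>
      simp only [allLists, Finset.mem_union, Finset.mem_image, List.length_cons,
        Nat.add_right_cancel_iff]
      constructor
      · rintro (⟨a, ha, h⟩ | ⟨a, ha, h⟩) <;>
          (cases h; exact (ih _).1 (by assumption))
      · intro h
        cases b
        · exact Or.inl ⟨t, (ih t).2 h, rfl⟩
        · exact Or.inr ⟨t, (ih t).2 h, rfl⟩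

lemma card_allLists : ∀ n, (allLists n).card = 2 ^ n := by
  intro n
  induction n with
  | zero => simp [allLists]
  | succ n ih =>
    have hdis : Disjoint ((allLists n).image (List.cons false))
        ((allLists n).image (List.cons true)) := by
      rw [Finset.disjoint_left]
      rintro l hl hl'
      simp only [Finset.mem_image] at hl hl'
      obtain ⟨a, _, rfl⟩ := hl
      obtain ⟨a', _, h⟩ := hl'
      cases h
    rw [allLists, Finset.card_union_of_disjoint hdis,
      Finset.card_image_of_injective _ (by intro a b h; cases h; rfl),
      Finset.card_image_of_injective _ (by intro a b h; cases h; rfl), ih]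
    ring

def RSet (n : ℕ) (Bad : Finset (List Bool)) : Finset (List Bool) :=
  (allLists n).filter (fun l => ∀ t ∈ Bad, ¬ t <+: l)

def BadT (Bad : Finset (List Bool)) (b : Bool) : Finset (List Bool) :=
  (Bad.filter (fun t => t.head? = some b)).image List.tail

lemma mem_BadT {Bad : Finset (List Bool)} {b : Bool} {t : List Bool} :
    t ∈ BadT Bad b ↔ (b :: t) ∈ Bad := by
  simp only [BadT, Finset.mem_image, Finset.mem_filter]
  constructor
  · rintro ⟨t0, ⟨h0, hh⟩, rfl⟩
    cases t0 with
    | nil => simp at hh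
    | cons c t0 => simp at hh; subst hh; exact h0
  · intro h; exact ⟨b :: t, ⟨h, rfl⟩, rfl⟩

lemma card_BadT (Bad : Finset (List Bool)) (b : Bool) :
    (BadT Bad b).card = (Bad.filter (fun t => t.head? = some b)).card := by
  apply Finset.card_image_of_injOn
  intro t ht t' ht' h
  simp only [Finset.coe_filter, Set.mem_setOf_eq] at ht ht'
  cases t with
  | nil => simp at ht
  | cons c s =>
    cases t' with
    | nil => simp at ht'
    | cons c' s' =>
      simp at ht ht' h
      rw [ht.2, ht'.2, h]

lemma card_BadT_le (Bad : Finset (List Bool)) (b : Bool) : (BadT Bad b).card ≤ Bad.card := by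
  rw [card_BadT]; exact Finset.card_filter_le _ _

lemma cons_mem_RSet {n : ℕ} {Bad : Finset (List Bool)} (h0 : [] ∉ Bad) (b : Bool)
    (l : List Bool) : (b :: l) ∈ RSet (n+1) Bad ↔ l ∈ RSet n (BadT Bad b) := by
  simp only [RSet, Finset.mem_filter, mem_allLists, List.length_cons, Nat.add_right_cancel_iff]
  constructor
  · rintro ⟨hlen, hc⟩
    refine ⟨hlen, fun t ht hp => ?_⟩
    exact hc (b :: t) (mem_BadT.1 ht) (List.cons_prefix_cons.2 ⟨rfl, hp⟩)
  · rintro ⟨hlen, hc⟩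
    refine ⟨hlen, fun t ht hp => ?_⟩
    cases t with
    | nil => exact h0 ht
    | cons c t' =>
      obtain ⟨rfl, hp'⟩ := List.cons_prefix_cons.1 hp
      exact hc t' (mem_BadT.2 ht) hp'

lemma abs_bound : ∀ (n : ℕ) (Bad : Finset (List Bool)), (RSet n Bad).Nonempty →
    2 ^ n ≤ (RSet n Bad).card * 2 ^ Bad.card := by
  intro n
  induction n with
  | zero =>
    intro Bad ⟨l, hl⟩
    have : 1 ≤ (RSet 0 Bad).card := Finset.card_pos.2 ⟨l, hl⟩
    calc 2^0 = 1 := rfl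
    _ ≤ (RSet 0 Bad).card * 2 ^ Bad.card :=
      Nat.one_le_iff_ne_zero.2 (by positivity)
  | succ n ih =>
    intro Bad ⟨l, hl⟩
    have hmem := hl
    simp only [RSet, Finset.mem_filter, mem_allLists] at hmem
    obtain ⟨hlen, hcond⟩ := hmem
    have h0 : [] ∉ Bad := fun h => hcond [] h List.nil_prefix
    cases l with
    | nil => simp at hlen
    | cons b l' =>
    by_cases hf0 : Bad.card = 0
    · -- Bad empty
      rw [Finset.card_eq_zero] at hf0
      subst hf0
      have : RSet (n+1) ∅ = allLists (n+1) := by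
        simp [RSet, Finset.filter_true_of_mem]
      rw [this, card_allLists]
      simp
    · have hl' : l' ∈ RSet n (BadT Bad b) := (cons_mem_RSet h0 b l').1 hl
      -- injection of RSet n (BadT Bad b) into RSet (n+1) Bad
      have hinj : ∀ (c : Bool) (S : Finset (List Bool)), (∀ x ∈ S, (c :: x) ∈ RSet (n+1) Bad) →
          S.card ≤ (RSet (n+1) Bad).card := by
        intro c S hS
        apply Finset.card_le_card_of_injOn (fun x => c :: x) hS
        intro x _ y _ h; cases h; rfl
      rcases lt_or_eq_of_le (card_BadT_le Bad b) with hlt | heq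
      · have h1 := ih (BadT Bad b) ⟨l', hl'⟩
        have h2 : (RSet n (BadT Bad b)).card ≤ (RSet (n+1) Bad).card :=
          hinj b _ (fun x hx => (cons_mem_RSet h0 b x).2 hx)
        calc 2^(n+1) = 2 * 2^n := by ring
        _ ≤ 2 * ((RSet n (BadT Bad b)).card * 2 ^ (BadT Bad b).card) :=
          Nat.mul_le_mul_left _ h1
        _ = (RSet n (BadT Bad b)).card * 2 ^ ((BadT Bad b).card + 1) := by ring
        _ ≤ (RSet (n+1) Bad).card * 2 ^ Bad.card := by
          apply Nat.mul_le_mul h2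
          exact Nat.pow_le_pow_right (by norm_num) hlt
      · -- every element of Bad starts with b
        have hall : ∀ t ∈ Bad, t.head? = some b := by
          have hsub : Bad.filter (fun t => t.head? = some b) = Bad := by
            apply Finset.eq_of_subset_of_card_le (Finset.filter_subset _ _)
            rw [← card_BadT Bad b, heq]
          intro t ht
          have := hsub ▸ ht
          rw [← hsub] at ht
          exact (Finset.mem_filter.1 ht).2
        have hallin : ∀ x ∈ allLists n, ((!b) :: x) ∈ RSet (n+1) Bad := by
          intro x hx
          simp only [RSet, Finset.mem_filter, mem_allLists, List.length_cons]
          refine ⟨by rw [(mem_allLists n x).1 hx], fun t ht hp => ?_⟩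
          have hh := hall t ht
          cases t with
          | nil => simp at hh
          | cons c t' =>
            simp at hh; subst hh
            obtain ⟨h1, _⟩ := List.cons_prefix_cons.1 hp
            simp at h1
        have h2 : 2^n ≤ (RSet (n+1) Bad).card := by
          rw [← card_allLists n]; exact hinj (!b) _ hallin
        calc 2^(n+1) = 2^n * 2 := by ring
        _ ≤ (RSet (n+1) Bad).card * 2 ^ Bad.card := by
          apply Nat.mul_le_mul h2
          have : 1 ≤ Bad.card := Nat.one_le_iff_ne_zero.2 hf0
          calc 2 = 2^1 := rfl
          _ ≤ 2 ^ Bad.card := Nat.pow_le_pow_right (by norm_num) this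



def nodeIdx (l : List Bool) : ℕ := l.foldl (fun n b => 2*n + 1 + bitv b) 0
def valL (l : List Bool) : ℕ := l.foldl (fun n b => 2*n + bitv b) 0

lemma nodeIdx_concat (l : List Bool) (b : Bool) :
    nodeIdx (l ++ [b]) = 2 * nodeIdx l + 1 + bitv b := by
  simp [nodeIdx, List.foldl_append]

lemma valL_concat (l : List Bool) (b : Bool) :
    valL (l ++ [b]) = 2 * valL l + bitv b := by
  simp [valL, List.foldl_append]

lemma valL_lt (l : List Bool) : valL l < 2 ^ l.length := by
  induction l using List.reverseRecOn with
  | nil => simp [valL]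
  | append_singleton l b ih =>
    rw [valL_concat]
    have := bitv_le_one b
    simp only [List.length_append, List.length_singleton]
    have : 2 ^ (l.length + 1) = 2 * 2 ^ l.length := by ring
    omega

lemma nodeIdx_eq (l : List Bool) : nodeIdx l + 1 = 2 ^ l.length + valL l := by
  induction l using List.reverseRecOn with
  | nil => simp [nodeIdx, valL]
  | append_singleton l b ih =>
    rw [nodeIdx_concat, valL_concat]
    simp only [List.length_append, List.length_singleton]
    have : 2 ^ (l.length + 1) = 2 * 2 ^ l.length := by ring
    omega

lemma nodeIdx_lt (l : List Bool) : nodeIdx l < 2 ^ (l.length + 1) - 1 := by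
  have h1 := nodeIdx_eq l
  have h2 := valL_lt l
  have : 2 ^ (l.length + 1) = 2 * 2 ^ l.length := by ring
  have h3 : (1:ℕ) ≤ 2 ^ l.length := Nat.one_le_two_pow
  omega

lemma nodeIdx_nil_iff (l : List Bool) : nodeIdx l = 0 ↔ l = [] := by
  constructor
  · intro h
    cases l using List.reverseRecOn with
    | nil => rfl
    | append_singleton l b => rw [nodeIdx_concat] at h; omega
  · rintro rfl; rfl

lemma valL_inj : ∀ (l l' : List Bool), l.length = l'.length → valL l = valL l' → l = l' := by
  intro l
  induction l using List.reverseRecOn with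
  | nil => intro l' h _; cases l' using List.reverseRecOn with
    | nil => rfl
    | append_singleton l' b => simp at h
  | append_singleton l b ih =>
    intro l' hlen hval
    cases l' using List.reverseRecOn with
    | nil => simp at hlen
    | append_singleton l'' b' =>
      simp only [List.length_append, List.length_singleton] at hlen
      rw [valL_concat, valL_concat] at hval
      have hb : b = b' := by
        cases b <;> cases b' <;> simp [bitv] at hval ⊢ <;> omega
      subst hb
      have : valL l = valL l'' := by cases b <;> simp [bitv] at hval <;> omega
      rw [ih l'' (by omega) this]

lemma length_eq_of_nodeIdx_eq {l l' : List Bool} (h : nodeIdx l = nodeIdx l') :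
    l.length = l'.length := by
  have h1 := nodeIdx_eq l
  have h2 := nodeIdx_eq l'
  have h3 := valL_lt l
  have h4 := valL_lt l'
  by_contra hne
  rcases Nat.lt_or_ge l.length l'.length with hlt | hge
  · have : 2 ^ (l.length + 1) ≤ 2 ^ l'.length := Nat.pow_le_pow_right (by norm_num) hlt
    have : 2 ^ (l.length+1) = 2 * 2^l.length := by ring
    have h5 : 2 * 2 ^ l.length ≤ 2 ^ l'.length := by omega
    omega
  · have hlt : l'.length < l.length := by omega
    have : 2 ^ (l'.length + 1) ≤ 2 ^ l.length := Nat.pow_le_pow_right (by norm_num) hlt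
    have : 2 ^ (l'.length+1) = 2 * 2^l'.length := by ring
    have h5 : 2 * 2 ^ l'.length ≤ 2 ^ l.length := by omega
    omega

lemma nodeIdx_inj {l l' : List Bool} (h : nodeIdx l = nodeIdx l') : l = l' := by
  have hlen := length_eq_of_nodeIdx_eq h
  have h1 := nodeIdx_eq l
  have h2 := nodeIdx_eq l'
  apply valL_inj _ _ hlen
  rw [hlen] at h1
  omega

lemma exists_list_valL (n : ℕ) (a : ℕ) (ha : a < 2 ^ n) :
    ∃ l : List Bool, l.length = n ∧ valL l = a := by
  induction n generalizing a with
  | zero => exact ⟨[], rfl, by simpa [valL] using by omega⟩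
  | succ n ih =>
    obtain ⟨l, hl, hv⟩ := ih (a / 2) (by
      have : 2 ^ (n+1) = 2 * 2 ^ n := by ring
      omega)
    refine ⟨l ++ [decide (a % 2 = 1)], by simp [hl], ?_⟩
    rw [valL_concat, hv]
    rcases Nat.mod_two_eq_zero_or_one a with h | h <;> simp [h, bitv] <;> omega


end SC17
namespace SC17
set_option linter.unusedSectionVars false
section GraphLemmas

variable {lam u N : ℕ} {U ι : Type*} [Fintype U] [DecidableEq U] [Fintype ι] [DecidableEq ι]
variable (Sw : ι → Finset U) (elem : Fin (2 ^ u) ≃ U)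

lemma two_pow_pos : 0 < 2 ^ (u+1) - 1 := by
  have : (2:ℕ) ≤ 2 ^ (u+1) := by
    calc (2:ℕ) = 2^1 := rfl
    _ ≤ 2^(u+1) := Nat.pow_le_pow_right (by norm_num) (by omega)
  omega

def srcV : SCV lam u N U ι := Sum.inl ()

def treeV (i : Fin lam) (a : Fin (2^(u+1)-1)) : SCV lam u N U ι := Sum.inr (Sum.inl (i, a))

def xbV (i : Fin lam) (x : U) (b : Bool) : SCV lam u N U ι :=
  Sum.inr (Sum.inr (Sum.inl (i, x, b)))

def nodeFin (l : List Bool) : Fin (2^(u+1)-1) :=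
  ⟨nodeIdx l % (2^(u+1)-1), Nat.mod_lt _ two_pow_pos⟩

lemma nodeFin_val {l : List Bool} (h : l.length ≤ u) :
    ((nodeFin l : Fin (2^(u+1)-1)) : ℕ) = nodeIdx l := by
  apply Nat.mod_eq_of_lt
  calc nodeIdx l < 2 ^ (l.length + 1) - 1 := nodeIdx_lt l
  _ ≤ 2 ^ (u+1) - 1 := by
      have : 2 ^ (l.length+1) ≤ 2^(u+1) := Nat.pow_le_pow_right (by norm_num) (by omega)
      omega

def nodeV (i : Fin lam) (l : List Bool) : SCV lam u N U ι := treeV i (nodeFin l)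

lemma mem_G {e : SCV lam u N U ι × SCV lam u N U ι} :
    e ∈ scGraph lam u N U ι Sw elem ↔ scEdge lam u N U ι Sw elem e := by
  simp [scGraph]

lemma src_root_mem (i : Fin lam) :
    (srcV, nodeV i []) ∈ scGraph lam u N U ι Sw elem := by
  rw [mem_G]
  show ((nodeFin [] : Fin (2^(u+1)-1)) : ℕ) = 0
  rw [nodeFin_val (by simp)]
  rfl

lemma tree_edge_mem (i : Fin lam) (l : List Bool) (b : Bool) (h : l.length + 1 ≤ u) :
    (nodeV i l, nodeV i (l ++ [b])) ∈ scGraph lam u N U ι Sw elem := by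
  rw [mem_G]
  refine ⟨rfl, ?_⟩
  rw [nodeFin_val (show (l++[b]).length ≤ u by rw [List.length_append, List.length_singleton]; omega), nodeFin_val (show l.length ≤ u by omega), nodeIdx_concat]
  cases b <;> simp [bitv] <;> omega

lemma leaf_xb_mem (i : Fin lam) (l : List Bool) (hlen : l.length = u) (bb : Bool) :
    (nodeV i l, xbV i (elem ⟨valL l, hlen ▸ valL_lt l⟩) bb) ∈ scGraph lam u N U ι Sw elem := by
  rw [mem_G]
  refine ⟨rfl, ⟨valL l, hlen ▸ valL_lt l⟩, ?_, rfl⟩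
  rw [nodeFin_val (by omega)]
  have h1 := nodeIdx_eq l
  have h2 : (1:ℕ) ≤ 2 ^ u := Nat.one_le_two_pow
  simp only [hlen] at h1 ⊢
  omega

lemma xb_y_mem (i : Fin lam) (x : U) (w : ι) (hx : x ∈ Sw w) :
    (xbV i x false, yV i w) ∈ scGraph lam u N U ι Sw elem := by
  rw [mem_G]; exact ⟨rfl, hx⟩

lemma xb_z_mem (i : Fin lam) (x : U) (c : Fin (u+1)) :
    (xbV i x true, zV i c) ∈ scGraph lam u N U ι Sw elem := by
  rw [mem_G]; exact rfl

lemma y_sink_mem (i : Fin lam) (w : ι) (j : Fin N) :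
    (yV i w, sinkV j) ∈ scGraph lam u N U ι Sw elem := by
  rw [mem_G]; trivial

lemma z_sink_mem (i : Fin lam) (c : Fin (u+1)) (j : Fin N) :
    (zV i c, sinkV j) ∈ scGraph lam u N U ι Sw elem := by
  rw [mem_G]; trivial

end GraphLemmas
end SC17
namespace SC17
set_option linter.unusedSectionVars false

section Paths
variable {V : Type*}

def edgesOf : List V → List (V × V)
  | [] => []
  | [_] => []
  | a :: b :: rest => (a, b) :: edgesOf (b :: rest)

lemma edgesOf_ne_nil (a b : V) (l : List V) : edgesOf (a :: b :: l) ≠ [] := by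
  simp [edgesOf]

lemma chain'_edgesOf : ∀ (l : List V), List.Chain' (fun e f : V × V => e.2 = f.1) (edgesOf l)
  | [] => List.isChain_nil
  | [_] => List.isChain_nil
  | a :: b :: rest => by
    cases rest with
    | nil => exact List.isChain_singleton _
    | cons c rest' =>
      rw [show edgesOf (a::b::c::rest') = (a,b) :: edgesOf (b::c::rest') from rfl]
      refine List.IsChain.cons (chain'_edgesOf (b::c::rest')) ?_
      intro y hy
      rw [show edgesOf (b::c::rest') = (b,c) :: edgesOf (c::rest') from rfl] at hy
      simp only [List.head?_cons, Option.mem_def, Option.some.injEq] at hy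
      rw [← hy]

lemma forall_mem_edgesOf {P : V × V → Prop} :
    ∀ (l : List V), List.Chain' (fun x y => P (x,y)) l → ∀ e ∈ edgesOf l, P e
  | [] => by intro _ e he; cases he
  | [_] => by intro _ e he; cases he
  | a :: b :: rest => by
    intro h e he
    rw [show edgesOf (a::b::rest) = (a,b) :: edgesOf (b::rest) from rfl] at he
    rcases List.mem_cons.1 he with rfl | he'
    · exact (List.isChain_cons.1 h).1 b rfl
    · exact forall_mem_edgesOf (b::rest) (List.isChain_cons.1 h).2 e he'

lemma getLast?_edgesOf : ∀ (l : List V) (a b : V),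
    ((edgesOf (a :: (l ++ [b]))).getLast?).map Prod.snd = some b
  | [] => by intro a b; rfl
  | c :: l' => by
    intro a b
    obtain ⟨d, l'', hl⟩ := List.exists_cons_of_ne_nil (show l' ++ [b] ≠ [] by simp)
    have h1 : edgesOf (a :: ((c :: l') ++ [b])) = (a,c) :: edgesOf (c :: (l' ++ [b])) := by
      rw [List.cons_append, hl]; rfl
    have h2 : edgesOf (c :: (l' ++ [b])) = (c,d) :: edgesOf (d :: l'') := by rw [hl]; rfl
    rw [h1, h2, List.getLast?_cons_cons, ← h2]
    exact getLast?_edgesOf l' c b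

lemma isPath_edgesOf {S : Finset (V × V)} (a b : V) (mid : List V)
    (h : List.Chain' (fun x y => (x,y) ∈ S) (a :: (mid ++ [b]))) :
    IsPath S a b (edgesOf (a :: (mid ++ [b]))) := by
  obtain ⟨c, l', hl⟩ := List.exists_cons_of_ne_nil (List.append_ne_nil_of_right_ne_nil mid (by simp) : mid ++ [b] ≠ [])
  refine ⟨?_, forall_mem_edgesOf _ h, chain'_edgesOf _, ?_, getLast?_edgesOf mid a b⟩
  · rw [hl]; exact edgesOf_ne_nil a c l'
  · rw [hl]
    rfl

lemma isPath_reach {S : Finset (V × V)} : ∀ (p : List (V×V)) (a t : V), IsPath S a t p →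
    ∀ e ∈ p, Relation.ReflTransGen (fun x y => (x,y) ∈ S) a e.1 := by
  intro p
  induction p with
  | nil => intro a t h e he; cases he
  | cons f rest ih =>
    intro a t h e he
    obtain ⟨hne, hmem, hchain, hhead, hlast⟩ := h
    have hf : f.1 = a := by simpa using hhead
    rcases List.mem_cons.1 he with rfl | he'
    · rw [hf]
    · have hrne : rest ≠ [] := by rintro rfl; cases he'
      have hfS : (a, f.2) ∈ S := by
        have := hmem f (by simp)
        rwa [← hf, Prod.mk.eta]
      obtain ⟨g, rest', rfl⟩ := List.exists_cons_of_ne_nil hrne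
      have hrest : IsPath S f.2 t (g :: rest') := by
        refine ⟨by simp, fun e' he'' => hmem e' (by simp [he'']), hchain.tail, ?_, ?_⟩
        · have := (List.isChain_cons_cons.1 hchain).1
          simp [← this]
        · rwa [List.getLast?_cons_cons] at hlast
      exact Relation.ReflTransGen.head hfS (ih f.2 t hrest e he')

end Paths

section Inv
variable {lam u N : ℕ} {U ι : Type*} [Fintype U] [DecidableEq U] [Fintype ι] [DecidableEq ι]
variable (Sw : ι → Finset U) (elem : Fin (2 ^ u) ≃ U)

def compV : SCV lam u N U ι → Option (Fin lam)
  | Sum.inl _ => none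
  | Sum.inr (Sum.inl (i, _)) => some i
  | Sum.inr (Sum.inr (Sum.inl (i, _, _))) => some i
  | Sum.inr (Sum.inr (Sum.inr (Sum.inl (i, _)))) => some i
  | Sum.inr (Sum.inr (Sum.inr (Sum.inr (Sum.inl (i, _))))) => some i
  | Sum.inr (Sum.inr (Sum.inr (Sum.inr (Sum.inr _)))) => none

def tagE (e : SCV lam u N U ι × SCV lam u N U ι) : Option (Fin lam) :=
  (compV e.1).orElse (fun _ => compV e.2)

lemma inv_to_tree {v : SCV lam u N U ι} {i : Fin lam} {a : Fin (2^(u+1)-1)}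
    (h : (v, Sum.inr (Sum.inl (i, a))) ∈ scGraph lam u N U ι Sw elem) :
    (v = srcV ∧ (a:ℕ) = 0) ∨
    (∃ a' : Fin (2^(u+1)-1), v = treeV i a' ∧
      ((a:ℕ) = 2*(a':ℕ)+1 ∨ (a:ℕ) = 2*(a':ℕ)+2)) := by
  rw [mem_G] at h
  rcases v with _ | (⟨i2,a2⟩ | (⟨i2,x2,b2⟩ | (⟨i2,w2⟩ | (⟨i2,c2⟩ | j2))))
  · exact Or.inl ⟨rfl, h⟩
  · obtain ⟨rfl, h2⟩ := h
    exact Or.inr ⟨a2, rfl, h2⟩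
  · cases b2 <;> exact h.elim
  · exact h.elim
  · exact h.elim
  · exact h.elim

lemma inv_from_src {v : SCV lam u N U ι} {x : Unit}
    (h : (Sum.inl x, v) ∈ scGraph lam u N U ι Sw elem) :
    ∃ i : Fin lam, v = nodeV i [] := by
  rw [mem_G] at h
  rcases v with _ | (⟨i2,a2⟩ | (⟨i2,x2,b2⟩ | (⟨i2,w2⟩ | (⟨i2,c2⟩ | j2))))
  · exact h.elim
  · refine ⟨i2, ?_⟩
    have : a2 = nodeFin [] := by
      apply Fin.ext
      rw [nodeFin_val (by simp), h]
      rfl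
    rw [nodeV, this]
    rfl
  · cases b2 <;> exact h.elim
  · exact h.elim
  · exact h.elim
  · exact h.elim

lemma inv_from_tree {w : SCV lam u N U ι} {i : Fin lam} {a : Fin (2^(u+1)-1)}
    (h : (Sum.inr (Sum.inl (i, a)), w) ∈ scGraph lam u N U ι Sw elem) :
    (∃ b, w = treeV i b) ∨ (∃ x bb, w = xbV i x bb) := by
  rw [mem_G] at h
  rcases w with _ | (⟨i2,a2⟩ | (⟨i2,x2,b2⟩ | (⟨i2,w2⟩ | (⟨i2,c2⟩ | j2))))
  · exact h.elim
  · obtain ⟨rfl, _⟩ := h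
    exact Or.inl ⟨a2, rfl⟩
  · obtain ⟨rfl, _⟩ := h
    exact Or.inr ⟨x2, b2, rfl⟩
  · exact h.elim
  · exact h.elim
  · exact h.elim

lemma inv_leaf_xb {i i' : Fin lam} {a : Fin (2^(u+1)-1)} {x : U} {bb : Bool}
    (h : (Sum.inr (Sum.inl (i, a)), xbV i' x bb) ∈ scGraph lam u N U ι Sw elem) :
    i = i' ∧ ∃ j : Fin (2^u), (a : ℕ) = 2^u - 1 + (j:ℕ) ∧ elem j = x := by
  rw [mem_G] at h
  exact h

lemma inv_to_sink {v : SCV lam u N U ι} {j : Fin N}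
    (h : (v, sinkV j) ∈ scGraph lam u N U ι Sw elem) :
    (∃ i w, v = yV i w) ∨ (∃ i c, v = zV i c) := by
  rw [mem_G] at h
  rcases v with _ | (⟨i2,a2⟩ | (⟨i2,x2,b2⟩ | (⟨i2,w2⟩ | (⟨i2,c2⟩ | j2))))
  · exact h.elim
  · exact h.elim
  · cases b2 <;> exact h.elim
  · exact Or.inl ⟨i2, w2, rfl⟩
  · exact Or.inr ⟨i2, c2, rfl⟩
  · exact h.elim

lemma sink_no_out {w : SCV lam u N U ι} {j : Fin N} :
    (sinkV j, w) ∉ scGraph lam u N U ι Sw elem := by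
  intro h
  rw [mem_G] at h
  rcases w with _ | (⟨i2,a2⟩ | (⟨i2,x2,b2⟩ | (⟨i2,w2⟩ | (⟨i2,c2⟩ | j2)))) <;>
    first
      | exact h.elim
      | (cases b2 <;> exact h.elim)

end Inv
end SC17
namespace SC17
set_option linter.unusedSectionVars false
section Reach2
variable {lam u N : ℕ} {U ι : Type*} [Fintype U] [DecidableEq U] [Fintype ι] [DecidableEq ι]
variable (Sw : ι → Finset U) (elem : Fin (2 ^ u) ≃ U)

lemma reach_node_fwd (F : Finset (SCV lam u N U ι × SCV lam u N U ι)) (i : Fin lam)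
    (l : List Bool) (hlen : l.length ≤ u)
    (hroot : (srcV, nodeV i []) ∉ F)
    (hpre : ∀ t : List Bool, t ≠ [] → t <+: l → (nodeV i t.dropLast, nodeV i t) ∉ F) :
    Reach (scGraph lam u N U ι Sw elem \ F) (srcV : SCV lam u N U ι) (nodeV i l) := by
  induction l using List.reverseRecOn with
  | nil =>
    exact Relation.ReflTransGen.single
      (Finset.mem_sdiff.2 ⟨src_root_mem Sw elem i, hroot⟩)
  | append_singleton l b ih =>
    have hlen' : l.length + 1 ≤ u := by simpa using hlen
    refine Relation.ReflTransGen.tail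
      (ih (by omega) (fun t ht hp => hpre t ht (hp.trans (l.prefix_append [b])))) ?_
    refine Finset.mem_sdiff.2 ⟨tree_edge_mem Sw elem i l b hlen', ?_⟩
    have := hpre (l ++ [b]) (by simp) (List.prefix_refl _)
    rwa [List.dropLast_concat] at this

lemma reach_node_inv (F : Finset (SCV lam u N U ι × SCV lam u N U ι)) (i : Fin lam)
    (l : List Bool) (hlen : l.length ≤ u)
    (h : Reach (scGraph lam u N U ι Sw elem \ F) (srcV : SCV lam u N U ι) (nodeV i l)) :
    (srcV, nodeV i []) ∉ F ∧
      ∀ t : List Bool, t ≠ [] → t <+: l → (nodeV i t.dropLast, nodeV i t) ∉ F := by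
  induction l using List.reverseRecOn with
  | nil =>
    rcases Relation.ReflTransGen.cases_tail h with heq | ⟨c, hc, hedge⟩
    · exact absurd heq (by simp [nodeV, treeV, srcV])
    · obtain ⟨hG, hnF⟩ := Finset.mem_sdiff.1 hedge
      rcases inv_to_tree Sw elem hG with ⟨rfl, _⟩ | ⟨a', _, ha'⟩
      · refine ⟨hnF, fun t ht hp => absurd (List.prefix_nil.1 hp) ht⟩
      · exfalso
        have h0 : ((nodeFin [] : Fin (2^(u+1)-1)) : ℕ) = 0 := by
          rw [nodeFin_val (by simp)]; rfl
        rw [show (nodeV i [] : SCV lam u N U ι) = Sum.inr (Sum.inl (i, nodeFin [])) from rfl] at *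
        omega
  | append_singleton l b ih =>
    have hlen' : l.length ≤ u := by simp at hlen; omega
    have hval : ((nodeFin (l ++ [b]) : Fin (2^(u+1)-1)) : ℕ) = 2 * nodeIdx l + 1 + bitv b := by
      rw [nodeFin_val (by simpa using hlen), nodeIdx_concat]
    rcases Relation.ReflTransGen.cases_tail h with heq | ⟨c, hc, hedge⟩
    · exact absurd heq (by simp [nodeV, treeV, srcV])
    · obtain ⟨hG, hnF⟩ := Finset.mem_sdiff.1 hedge
      rcases inv_to_tree Sw elem hG with ⟨rfl, h0⟩ | ⟨a', rfl, ha'⟩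
      · exfalso
        have := bitv_le_one b
        omega
      · have ha'' : (a' : ℕ) = nodeIdx l := by
          have := bitv_le_one b
          cases b <;> simp [bitv] at hval <;> omega
        have hc' : a' = nodeFin l := by
          apply Fin.ext
          rw [nodeFin_val hlen', ha'']
        subst hc'
        have hIH := ih hlen' hc
        refine ⟨hIH.1, fun t ht hp => ?_⟩
        rcases List.prefix_concat_iff.1 hp with rfl | hp'
        · rwa [List.dropLast_concat]
        · exact hIH.2 t ht hp'

lemma exits_tree (F : Finset (SCV lam u N U ι × SCV lam u N U ι)) :
    ∀ (p : List (SCV lam u N U ι × SCV lam u N U ι)) (i : Fin lam)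
      (a : Fin (2^(u+1)-1)) (jj : Fin N),
    (∀ e ∈ p, e ∈ scGraph lam u N U ι Sw elem) →
    List.Chain' (fun e f : _ × _ => e.2 = f.1) p →
    p.head?.map Prod.fst = some (treeV i a) →
    p.getLast?.map Prod.snd = some (sinkV jj) →
    ∃ e ∈ p, ∃ a' x bb, e = (treeV i a', xbV i x bb) := by
  intro p
  induction p with
  | nil => intro i a jj _ _ hh _; simp at hh
  | cons f rest ih =>
    intro i a jj hmem hchain hhead hlast
    have hf : f.1 = treeV i a := by simpa using hhead
    have hfG := hmem f (by simp)
    rw [show f = (f.1, f.2) from rfl, hf] at hfG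
    rcases inv_from_tree Sw elem hfG with ⟨b, hb⟩ | ⟨x, bb, hxb⟩
    · -- continues in the tree
      cases rest with
      | nil =>
        exfalso
        have : f.2 = sinkV jj := by simpa using hlast
        rw [hb] at this
        simp [treeV, sinkV] at this
      | cons g rest' =>
        have hg1 : g.1 = treeV i b := by
          have := (List.isChain_cons_cons.1 hchain).1
          rw [← this, hb]
        obtain ⟨e, he, hee⟩ := ih i b jj (fun e' he' => hmem e' (by simp [he']))
          hchain.tail (by simp [hg1]) (by rwa [List.getLast?_cons_cons] at hlast)
        exact ⟨e, by simp [he], hee⟩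
    · exact ⟨f, by simp, a, x, bb, by rw [← hf, ← hxb]⟩

end Reach2
end SC17
namespace SC17
set_option linter.unusedSectionVars false
section Build
variable {lam u N : ℕ} {U ι : Type*} [Fintype U] [DecidableEq U] [Fintype ι] [DecidableEq ι]
variable (Sw : ι → Finset U) (elem : Fin (2 ^ u) ≃ U)

def xF (l : List Bool) : Fin (2^u) := ⟨valL l % 2^u, Nat.mod_lt _ (by positivity)⟩

def xOf (elem : Fin (2 ^ u) ≃ U) (l : List Bool) : U := elem (xF l)

lemma xF_val {l : List Bool} (hlen : l.length = u) : ((xF l : Fin (2^u)) : ℕ) = valL l :=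
  Nat.mod_eq_of_lt (hlen ▸ valL_lt l)

lemma leaf_xb_mem' (i : Fin lam) (l : List Bool) (hlen : l.length = u) (bb : Bool) :
    ((nodeV i l, xbV i (xOf elem l) bb) : SCV lam u N U ι × SCV lam u N U ι)
      ∈ scGraph lam u N U ι Sw elem := by
  rw [mem_G]
  refine ⟨rfl, xF l, ?_, rfl⟩
  rw [nodeFin_val (by omega), xF_val hlen]
  have h1 := nodeIdx_eq l
  have h2 : (1:ℕ) ≤ 2 ^ u := Nat.one_le_two_pow
  simp only [hlen] at h1 ⊢
  omega

lemma xOf_inj {l l' : List Bool} (hl : l.length = u) (hl' : l'.length = u)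
    (h : xOf (U := U) elem l = xOf elem l') : l = l' := by
  apply valL_inj _ _ (hl.trans hl'.symm)
  have := elem.injective h
  have h2 : ((xF l : Fin (2^u)) : ℕ) = ((xF l' : Fin (2^u)) : ℕ) := by rw [this]
  rwa [xF_val hl, xF_val hl'] at h2

def prefList (i : Fin lam) (l : List Bool) : List (SCV lam u N U ι) :=
  (List.range (l.length + 1)).map (fun d => nodeV i (l.take d))

lemma buildPath (HS : Finset (SCV lam u N U ι × SCV lam u N U ι)) (i : Fin lam) (j : Fin N)
    (l : List Bool) (x : U) (bb : Bool) (mid2 : SCV lam u N U ι)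
    (hsrc : ((srcV, nodeV i []) : _ × _) ∈ HS)
    (htree : ∀ d, d < l.length → ((nodeV i (l.take d), nodeV i (l.take (d+1))) : _ × _) ∈ HS)
    (h1 : ((nodeV i l, xbV i x bb) : _ × _) ∈ HS)
    (h2 : ((xbV i x bb, mid2) : _ × _) ∈ HS)
    (h3 : ((mid2, sinkV j) : _ × _) ∈ HS)
    (hmid2 : compV mid2 = some i) :
    ∃ q, IsPath HS (srcV : SCV lam u N U ι) (sinkV j) q ∧ ∀ e ∈ q, tagE e = some i := by
  classical
  set Rc : SCV lam u N U ι → SCV lam u N U ι → Prop :=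
    fun a b => ((a, b) : _ × _) ∈ HS ∧ tagE (a, b) = some i with hRc
  have hcomp : ∀ d, compV (nodeV i (l.take d) : SCV lam u N U ι) = some i := fun d => rfl
  -- chain on the full vertex list
  have hchain : List.Chain' Rc (srcV :: (prefList i l ++ [xbV i x bb, mid2, sinkV j])) := by
    have hc1 : List.Chain' Rc (prefList i l) := by
      show List.IsChain Rc (prefList i l)
      rw [prefList, List.isChain_map]
      rw [List.isChain_range_succ]
      intro m hm
      exact ⟨htree m hm, rfl⟩
    have hc2 : List.Chain' Rc [xbV i x bb, mid2, sinkV j] := by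
      refine List.isChain_cons_cons.2 ⟨⟨h2, rfl⟩, ?_⟩
      refine List.isChain_cons_cons.2 ⟨⟨h3, ?_⟩, List.isChain_singleton _⟩
      · show (compV mid2).orElse _ = some i
        rw [hmid2]; rfl
    have hglue : ∀ a ∈ (prefList i l).getLast?, ∀ b ∈ ([xbV i x bb, mid2, sinkV j] : List _).head?, Rc a b := by
      intro a ha b hb
      have hlast : (prefList i l).getLast? = some (nodeV i l : SCV lam u N U ι) := by
        rw [prefList, List.range_succ, List.map_append]
        simp [List.getLast?_concat, List.take_length]
      rw [hlast] at ha
      simp only [Option.mem_def, Option.some.injEq] at ha hb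
      have hb' : b = xbV i x bb := by
        simp only [List.head?_cons, Option.some.injEq] at hb
        exact hb.symm
      rw [← ha, hb']
      exact ⟨h1, rfl⟩
    have hcat : List.Chain' Rc (prefList i l ++ [xbV i x bb, mid2, sinkV j]) :=
      List.isChain_append.2 ⟨hc1, hc2, hglue⟩
    refine List.isChain_cons.2 ⟨?_, hcat⟩
    intro y hy
    have hhead : (prefList i l ++ [xbV i x bb, mid2, sinkV j]).head? = some (nodeV i []) := by
      rw [prefList, List.range_succ_eq_map]
      simp
    rw [hhead] at hy
    simp only [Option.mem_def, Option.some.injEq] at hy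
    rw [← hy]
    exact ⟨hsrc, rfl⟩
  have hshape : (srcV :: (prefList i l ++ [xbV i x bb, mid2, sinkV j]) : List (SCV lam u N U ι))
      = srcV :: ((prefList i l ++ [xbV i x bb, mid2]) ++ [sinkV j]) := by
    simp [List.append_assoc]
  refine ⟨edgesOf (srcV :: ((prefList i l ++ [xbV i x bb, mid2]) ++ [sinkV j])), ?_, ?_⟩
  · exact isPath_edgesOf _ _ _ (by rw [← hshape]; exact hchain.imp (fun a b hab => hab.1))
  · exact forall_mem_edgesOf _ (by rw [← hshape]; exact hchain.imp (fun a b hab => hab.2))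

end Build
end SC17
namespace SC17
set_option linter.unusedSectionVars false
section Routes
variable {lam u N : ℕ} {U ι : Type*} [Fintype U] [DecidableEq U] [Fintype ι] [DecidableEq ι]
variable (Sw : ι → Finset U) (elem : Fin (2 ^ u) ≃ U)

def eL (elem : Fin (2 ^ u) ≃ U) (i : Fin lam) (j : Fin N) (l : List Bool) (w : ι) :
    List (SCV lam u N U ι × SCV lam u N U ι) :=
  [(nodeV i l, xbV i (xOf elem l) false), (xbV i (xOf elem l) false, yV i w),
    (yV i w, sinkV j)]

def eR (elem : Fin (2 ^ u) ≃ U) (i : Fin lam) (j : Fin N) (l : List Bool) (c : Fin (u+1)) :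
    List (SCV lam u N U ι × SCV lam u N U ι) :=
  [(nodeV i l, xbV i (xOf elem l) true), (xbV i (xOf elem l) true, zV i c),
    (zV i c, sinkV j)]

lemma nodeFin_inj {l l' : List Bool} (hl : l.length ≤ u) (hl' : l'.length ≤ u)
    (h : (nodeFin l : Fin (2^(u+1)-1)) = nodeFin l') : l = l' := by
  apply nodeIdx_inj
  have := congrArg Fin.val h
  rwa [nodeFin_val hl, nodeFin_val hl'] at this

lemma xF_inj {l l' : List Bool} (hl : l.length = u) (hl' : l'.length = u)
    (h : (xF l : Fin (2^u)) = xF l') : l = l' := by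
  apply valL_inj _ _ (hl.trans hl'.symm)
  have := congrArg Fin.val h
  rwa [xF_val hl, xF_val hl'] at this

lemma eLR_disj (i i' : Fin lam) (j j' : Fin N) (l l' : List Bool) (w : ι) (c : Fin (u+1))
    (e : SCV lam u N U ι × SCV lam u N U ι)
    (he : e ∈ eL elem i j l w) (he' : e ∈ eR elem i' j' l' c) : False := by
  simp only [eL, List.mem_cons, List.mem_singleton, List.not_mem_nil, or_false] at he
  rcases he with rfl | rfl | rfl <;>
    simp [eR, nodeV, treeV, xbV, yV, zV, sinkV, Prod.ext_iff] at he'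

lemma eRR_disj (i : Fin lam) (j j' : Fin N) (l l' : List Bool) (c c' : Fin (u+1))
    (hl : l.length = u) (hl' : l'.length = u)
    (e : SCV lam u N U ι × SCV lam u N U ι)
    (he : e ∈ eR elem i j l c) (he' : e ∈ eR elem i j' l' c') : l = l' ∨ c = c' := by
  simp only [eR, List.mem_cons, List.mem_singleton, List.not_mem_nil, or_false] at he he'
  rcases he with rfl | rfl | rfl <;> rcases he' with h | h | h <;>
    simp only [Prod.ext_iff, nodeV, treeV, xbV, zV, sinkV, Sum.inr.injEq, Sum.inl.injEq,
      Prod.mk.injEq, and_true, true_and] at h <;>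
    [skip; skip; skip; skip; skip; skip; skip; skip; skip]
  · exact Or.inl (nodeFin_inj hl.le hl'.le h.1)
  · exact absurd h.1 (by simp)
  · exact absurd h.1 (by simp)
  · exact absurd h.1 (by simp)
  · exact Or.inr h.2
  · exact absurd h.1 (by simp)
  · exact absurd h.1 (by simp)
  · exact absurd h.1 (by simp)
  · exact Or.inr h.1

lemma eL_snd_not_tree (i i' : Fin lam) (j : Fin N) (l : List Bool) (w : ι)
    (e : SCV lam u N U ι × SCV lam u N U ι) (he : e ∈ eL elem i j l w)
    (a : Fin (2^(u+1)-1)) : e.2 ≠ Sum.inr (Sum.inl (i', a)) := by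
  simp only [eL, List.mem_cons, List.mem_singleton, List.not_mem_nil, or_false] at he
  rcases he with rfl | rfl | rfl <;> simp [xbV, yV, sinkV]

lemma eR_snd_not_tree (i i' : Fin lam) (j : Fin N) (l : List Bool) (c : Fin (u+1))
    (e : SCV lam u N U ι × SCV lam u N U ι) (he : e ∈ eR elem i j l c)
    (a : Fin (2^(u+1)-1)) : e.2 ≠ Sum.inr (Sum.inl (i', a)) := by
  simp only [eR, List.mem_cons, List.mem_singleton, List.not_mem_nil, or_false] at he
  rcases he with rfl | rfl | rfl <;> simp [xbV, zV, sinkV]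

end Routes
end SC17
namespace SC17
set_option linter.unusedSectionVars false
set_option maxHeartbeats 1000000
section Core
variable {lam u N : ℕ} {U ι : Type*} [Fintype U] [DecidableEq U] [Fintype ι] [DecidableEq ι]
variable (Sw : ι → Finset U) (elem : Fin (2 ^ u) ≃ U)

lemma core (Scov : Finset ι) (hScov : ∀ x : U, ∃ w ∈ Scov, x ∈ Sw w)
    (F : Finset (SCV lam u N U ι × SCV lam u N U ι)) (hF : F.card ≤ u + 1)
    (i : Fin lam) (j : Fin N) (l₀ : List Bool) (h₀ : l₀.length = u)
    (hreach : Reach (scGraph lam u N U ι Sw elem \ F) (srcV : SCV lam u N U ι) (nodeV i l₀)) :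
    ∃ q, IsPath (((scGraph lam u N U ι Sw elem).filter fun e =>
        (∃ j : Fin N, e.2 = sinkV j) →
          ((∃ i : Fin lam, ∃ w ∈ Scov, e.1 = yV i w) ∨
            (∃ i : Fin lam, ∃ c : Fin (u + 1), e.1 = zV i c))) \ F)
      (srcV : SCV lam u N U ι) (sinkV j) q ∧ ∀ e ∈ q, tagE e = some i := by
  classical
  set HG := ((scGraph lam u N U ι Sw elem).filter fun e =>
        (∃ j : Fin N, e.2 = sinkV j) →
          ((∃ i : Fin lam, ∃ w ∈ Scov, e.1 = yV i w) ∨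
            (∃ i : Fin lam, ∃ c : Fin (u + 1), e.1 = zV i c))) with hHG
  have hHn : ∀ e : SCV lam u N U ι × SCV lam u N U ι, e ∈ scGraph lam u N U ι Sw elem →
      (∀ jj : Fin N, e.2 ≠ sinkV jj) → e ∈ HG := by
    intro e he hns
    rw [hHG, Finset.mem_filter]
    exact ⟨he, fun ⟨jj, hjj⟩ => absurd hjj (hns jj)⟩
  have hHy : ∀ (i' : Fin lam) (w : ι), w ∈ Scov → ((yV i' w, sinkV j) : _ × _) ∈ HG := by
    intro i' w hw
    rw [hHG, Finset.mem_filter]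
    exact ⟨y_sink_mem Sw elem i' w j, fun _ => Or.inl ⟨i', w, hw, rfl⟩⟩
  have hHz : ∀ (i' : Fin lam) (c : Fin (u+1)), ((zV i' c, sinkV j) : _ × _) ∈ HG := by
    intro i' c
    rw [hHG, Finset.mem_filter]
    exact ⟨z_sink_mem Sw elem i' c j, fun _ => Or.inr ⟨i', c, rfl⟩⟩
  -- the bad prefixes and surviving leaves
  set Bad : Finset (List Bool) := ((Finset.range (u+1)).biUnion allLists).filter
      (fun t => t ≠ [] ∧ ((nodeV i t.dropLast, nodeV i t) : _ × _) ∈ F) with hBad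
  have mem_Bad : ∀ t : List Bool, t ∈ Bad ↔
      (t.length ≤ u ∧ t ≠ [] ∧ ((nodeV i t.dropLast, nodeV i t) : _ × _) ∈ F) := by
    intro t
    rw [hBad, Finset.mem_filter, Finset.mem_biUnion]
    constructor
    · rintro ⟨⟨d, hd, hlen⟩, h2⟩
      rw [Finset.mem_range] at hd
      rw [mem_allLists] at hlen
      exact ⟨by omega, h2⟩
    · rintro ⟨h1, h2⟩
      exact ⟨⟨t.length, Finset.mem_range.2 (by omega), (mem_allLists _ _).2 rfl⟩, h2⟩
  have hRmem : ∀ l : List Bool, l ∈ RSet u Bad ↔ (l.length = u ∧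
      ∀ t, t ≠ [] → t <+: l → ((nodeV i t.dropLast, nodeV i t) : _ × _) ∉ F) := by
    intro l
    rw [RSet, Finset.mem_filter, mem_allLists]
    constructor
    · rintro ⟨hlen, hc⟩
      refine ⟨hlen, fun t ht hp hmem => hc t ((mem_Bad t).2 ⟨?_, ht, hmem⟩) hp⟩
      have := hp.length_le; omega
    · rintro ⟨hlen, hc⟩
      refine ⟨hlen, fun t ht hp => ?_⟩
      obtain ⟨_, hne, hmem⟩ := (mem_Bad t).1 ht
      exact hc t hne hp hmem
  obtain ⟨hroot, hpre₀⟩ := reach_node_inv Sw elem F i l₀ (by omega) hreach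
  have hl₀R : l₀ ∈ RSet u Bad := (hRmem l₀).2 ⟨h₀, hpre₀⟩
  have hsrcHS : ((srcV, nodeV i []) : _ × _) ∈ HG \ F :=
    Finset.mem_sdiff.2 ⟨hHn _ (src_root_mem Sw elem i)
      (fun jj => by simp [nodeV, treeV, sinkV]), hroot⟩
  have htreeHS : ∀ l ∈ RSet u Bad, ∀ d, d < l.length →
      ((nodeV i (l.take d), nodeV i (l.take (d+1))) : _ × _) ∈ HG \ F := by
    intro l hl d hd
    obtain ⟨hlen, hc⟩ := (hRmem l).1 hl
    have hget : l.take (d+1) = l.take d ++ [l.get ⟨d, hd⟩] := by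
      rw [List.take_succ]
      simp [List.getElem?_eq_getElem hd]
    have hGmem : ((nodeV i (l.take d), nodeV i (l.take (d+1))) : _ × _)
        ∈ scGraph lam u N U ι Sw elem := by
      rw [hget]
      exact tree_edge_mem Sw elem i (l.take d) _ (by rw [List.length_take]; omega)
    refine Finset.mem_sdiff.2 ⟨hHn _ hGmem (fun jj => by simp [nodeV, treeV, sinkV]), ?_⟩
    have hne : l.take (d+1) ≠ [] := by
      rw [hget]
      exact List.append_ne_nil_of_right_ne_nil _ (by simp)
    have := hc (l.take (d+1)) hne (List.take_prefix _ _)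
    rw [hget, List.dropLast_concat, ← hget] at this
    exact this
  rcases Classical.em
      ((∃ l ∈ RSet u Bad, ∃ w ∈ Scov, xOf elem l ∈ Sw w ∧ ∀ e ∈ eL elem i j l w, e ∉ F) ∨
      (∃ l ∈ RSet u Bad, ∃ c : Fin (u+1), ∀ e ∈ eR elem i j l c, e ∉ F)) with hfree | hfree
  · -- a free route exists: build the path
    rcases hfree with ⟨l, hlR, w, hw, hxw, hfr⟩ | ⟨l, hlR, c, hfr⟩
    · obtain ⟨hlen, _⟩ := (hRmem l).1 hlR
      refine buildPath (HG \ F) i j l (xOf elem l) false (yV i w) hsrcHS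
        (fun d hd => htreeHS l hlR d hd) ?_ ?_ ?_ rfl
      · refine Finset.mem_sdiff.2 ⟨hHn _ (leaf_xb_mem' Sw elem i l hlen false)
          (fun jj => by simp [xbV, sinkV]), hfr _ (by simp [eL])⟩
      · refine Finset.mem_sdiff.2 ⟨hHn _ (xb_y_mem Sw elem i (xOf elem l) w hxw)
          (fun jj => by simp [yV, sinkV]), hfr _ (by simp [eL])⟩
      · exact Finset.mem_sdiff.2 ⟨hHy i w hw, hfr _ (by simp [eL])⟩
    · obtain ⟨hlen, _⟩ := (hRmem l).1 hlR
      refine buildPath (HG \ F) i j l (xOf elem l) true (zV i c) hsrcHS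
        (fun d hd => htreeHS l hlR d hd) ?_ ?_ ?_ rfl
      · refine Finset.mem_sdiff.2 ⟨hHn _ (leaf_xb_mem' Sw elem i l hlen true)
          (fun jj => by simp [xbV, sinkV]), hfr _ (by simp [eR])⟩
      · refine Finset.mem_sdiff.2 ⟨hHn _ (xb_z_mem Sw elem i (xOf elem l) c)
          (fun jj => by simp [zV, sinkV]), hfr _ (by simp [eR])⟩
      · exact Finset.mem_sdiff.2 ⟨hHz i c, hfr _ (by simp [eR])⟩
  · -- all routes blocked: contradiction with |F| ≤ u+1
    exfalso
    push_neg at hfree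
    obtain ⟨hblockL, hblockR⟩ := hfree
    have hρpos : 1 ≤ (RSet u Bad).card := Finset.card_pos.2 ⟨l₀, hl₀R⟩
    set n := min (RSet u Bad).card (u+2) with hn
    have hn1 : 1 ≤ n := by omega
    have hnu : n ≤ u + 2 := by omega
    obtain ⟨R', hR'sub, hR'card⟩ :=
      Finset.exists_subset_card_eq (min_le_left _ _ : n ≤ (RSet u Bad).card)
    set g : Fin n → List Bool :=
      fun m => (R'.equivFin.symm (Fin.cast hR'card.symm m) : List Bool) with hg
    have ginj : Function.Injective g := by
      intro m m' h
      have h2 := R'.equivFin.symm.injective (Subtype.ext h)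
      have h3 := congrArg Fin.val h2
      exact Fin.ext (by simpa using h3)
    have gR : ∀ m, g m ∈ RSet u Bad := fun m => hR'sub (Subtype.mem _)
    have glen : ∀ m, (g m).length = u := fun m => ((hRmem _).1 (gR m)).1
    set m₀ : Fin n := ⟨0, hn1⟩ with hm₀
    obtain ⟨w₀, hw₀S, hw₀x⟩ := hScov (xOf elem (g m₀))
    set zidx : Fin n → Fin (u+1) := fun m => ⟨(m:ℕ)-1, by have := m.2; omega⟩ with hzidx
    have hsel : ∀ m : Fin n, ∃ e, e ∈ F ∧
        ((m:ℕ) = 0 → e ∈ eL elem i j (g m) w₀) ∧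
        ((m:ℕ) ≠ 0 → e ∈ eR elem i j (g m) (zidx m)) := by
      intro m
      by_cases h0 : (m:ℕ) = 0
      · have hmm : m = m₀ := Fin.ext h0
        obtain ⟨e, he, heF⟩ := hblockL (g m) (hR'sub (Subtype.mem _)) w₀ hw₀S
          (by rw [hmm]; exact hw₀x)
        exact ⟨e, heF, fun _ => he, fun hc => absurd h0 hc⟩
      · obtain ⟨e, he, heF⟩ := hblockR (g m) (gR m) (zidx m)
        exact ⟨e, heF, fun hc => absurd hc h0, fun _ => he⟩
    choose sel hselF hselR0 hselR1 using hsel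
    have hselinj : Function.Injective sel := by
      intro m m' h
      by_contra hne
      by_cases hm : (m:ℕ) = 0 <;> by_cases hm' : (m':ℕ) = 0
      · exact hne (Fin.ext (hm.trans hm'.symm))
      · have h2 := hselR1 m' hm'
        rw [← h] at h2
        exact eLR_disj elem i i j j (g m) (g m') w₀ (zidx m') _ (hselR0 m hm) h2
      · have h2 := hselR1 m hm
        rw [h] at h2
        exact eLR_disj elem i i j j (g m') (g m) w₀ (zidx m) _ (hselR0 m' hm') h2
      · have h2 := hselR1 m' hm'
        rw [← h] at h2
        rcases eRR_disj elem i j j (g m) (g m') (zidx m) (zidx m') (glen m) (glen m')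
          (sel m) (hselR1 m hm) h2 with hll | hcc
        · exact hne (ginj hll)
        · have hv := congrArg Fin.val hcc
          have hb1 := m.2
          have hb2 := m'.2
          simp only [hzidx] at hv
          exact hne (Fin.ext (by omega))
    set edgeOfB : List Bool → SCV lam u N U ι × SCV lam u N U ι :=
      fun t => (nodeV i t.dropLast, nodeV i t) with hedgeOfB
    have hBinj : Set.InjOn edgeOfB Bad := by
      intro t ht t' ht' h
      have h2 : (nodeV i t : SCV lam u N U ι) = nodeV i t' := congrArg Prod.snd h
      rw [nodeV, nodeV, treeV, treeV] at h2
      simp only [Sum.inr.injEq, Sum.inl.injEq, Prod.mk.injEq] at h2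
      exact nodeFin_inj ((mem_Bad t).1 ht).1 ((mem_Bad t').1 ht').1 h2.2
    set T : Finset (SCV lam u N U ι × SCV lam u N U ι) :=
      Bad.image edgeOfB ∪ Finset.univ.image sel with hT
    have hsel_not_tree : ∀ m (t : List Bool), sel m ≠ edgeOfB t := by
      intro m t hcon
      by_cases h0 : (m:ℕ) = 0
      · exact eL_snd_not_tree elem i i j (g m) w₀ (sel m) (hselR0 m h0) (nodeFin t)
          (by rw [hcon]; rfl)
      · exact eR_snd_not_tree elem i i j (g m) (zidx m) (sel m) (hselR1 m h0) (nodeFin t)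
          (by rw [hcon]; rfl)
    have hdisjT : Disjoint (Bad.image edgeOfB) (Finset.univ.image sel) := by
      rw [Finset.disjoint_left]
      rintro e he1 he2
      obtain ⟨t, ht, rfl⟩ := Finset.mem_image.1 he1
      obtain ⟨m, _, hm⟩ := Finset.mem_image.1 he2
      exact hsel_not_tree m t hm
    have hTsub : T ⊆ F := by
      rw [hT]
      apply Finset.union_subset
      · intro e he
        obtain ⟨t, ht, rfl⟩ := Finset.mem_image.1 he
        exact ((mem_Bad t).1 ht).2.2
      · intro e he
        obtain ⟨m, _, rfl⟩ := Finset.mem_image.1 he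
        exact hselF m
    have hTcard : T.card = Bad.card + n := by
      rw [hT, Finset.card_union_of_disjoint hdisjT, Finset.card_image_of_injOn hBinj,
        Finset.card_image_of_injective _ hselinj]
      simp
    by_cases hcase : n ≤ u + 1
    · -- n = R.card; use the extra route and the counting bound
      have hnR : n = (RSet u Bad).card := by omega
      have hnext : (n - 1 : ℕ) < u + 1 := by omega
      obtain ⟨ex, hexmem, hexF⟩ := hblockR (g m₀) (gR m₀) ⟨n-1, hnext⟩
      have hexT : ex ∉ T := by
        rw [hT]
        intro hcon
        rcases Finset.mem_union.1 hcon with h1 | h1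
        · obtain ⟨t, ht, heq⟩ := Finset.mem_image.1 h1
          exact eR_snd_not_tree elem i i j (g m₀) ⟨n-1, hnext⟩ ex hexmem (nodeFin t)
            (by rw [← heq]; rfl)
        · obtain ⟨m, _, hm⟩ := Finset.mem_image.1 h1
          by_cases h0 : (m:ℕ) = 0
          · have h1' := hselR0 m h0
            rw [hm] at h1'
            exact eLR_disj elem i i j j (g m) (g m₀) w₀ ⟨n-1, hnext⟩ ex h1' hexmem
          · have h1' := hselR1 m h0
            rw [hm] at h1'
            rcases eRR_disj elem i j j (g m) (g m₀) (zidx m) ⟨n-1, hnext⟩ (glen m)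
              (glen m₀) ex h1' hexmem with hll | hcc
            · exact h0 (by rw [ginj hll])
            · have hv := congrArg Fin.val hcc
              simp only [hzidx] at hv
              have hb1 := m.2
              omega
      have hcard2 : Bad.card + n + 1 ≤ F.card := by
        have h1 : insert ex T ⊆ F := Finset.insert_subset hexF hTsub
        have h2 := Finset.card_le_card h1
        rw [Finset.card_insert_of_notMem hexT, hTcard] at h2
        omega
      have habs := abs_bound u Bad ⟨l₀, hl₀R⟩
      have hble : Bad.card ≤ u := by omega
      have hpow : 2 ^ (u - Bad.card) * 2 ^ Bad.card = 2 ^ u := by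
        rw [← pow_add]
        congr 1
        omega
      have h3 : 2 ^ (u - Bad.card) ≤ (RSet u Bad).card := by
        have hx := habs
        rw [← hpow] at hx
        exact Nat.le_of_mul_le_mul_right hx (by positivity)
      have h4 : u - Bad.card < 2 ^ (u - Bad.card) := Nat.lt_two_pow_self
      omega
    · have : Bad.card + n ≤ F.card := hTcard ▸ Finset.card_le_card hTsub
      omega

end Core
end SC17
namespace SC17
set_option linter.unusedSectionVars false
set_option maxHeartbeats 1000000

section MoreParts
variable {V : Type*}

lemma isPath_mono {S S' : Finset (V × V)} (hsub : S ⊆ S') {a t : V} {p : List (V × V)}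
    (h : IsPath S a t p) : IsPath S' a t p :=
  ⟨h.1, fun e he => hsub (h.2.1 e he), h.2.2.1, h.2.2.2.1, h.2.2.2.2⟩

lemma isPath_tail {S : Finset (V × V)} {f : V × V} {rest : List (V × V)} {a t : V}
    (h : IsPath S a t (f :: rest)) (hne : rest ≠ []) : IsPath S f.2 t rest := by
  obtain ⟨_, hmem, hchain, hhead, hlast⟩ := h
  obtain ⟨g, rest', rfl⟩ := List.exists_cons_of_ne_nil hne
  refine ⟨by simp, fun e' he'' => hmem e' (by simp [he'']), hchain.tail, ?_,
    by rwa [List.getLast?_cons_cons] at hlast⟩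
  have := (List.isChain_cons_cons.1 hchain).1
  simp [← this]

lemma edp_mono {S S' : Finset (V × V)} (hsub : S ⊆ S') {s t : V} {r : ℕ}
    (h : EDP S s t r) : EDP S' s t r := by
  obtain ⟨ps, hps, hdisj⟩ := h
  exact ⟨ps, fun m => isPath_mono hsub (hps m), hdisj⟩

lemma edp_card_le {S : Finset (V × V)} [DecidableEq V] {s t : V} {r : ℕ}
    (h : EDP S s t r) : r ≤ S.card := by
  obtain ⟨ps, hps, hdisj⟩ := h
  have hex : ∀ m : Fin r, ∃ (e : V × V) (rest : List (V × V)), ps m = e :: rest := by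
    intro m
    exact List.exists_cons_of_ne_nil (hps m).1
  choose hd tl heq using hex
  have hmemp : ∀ m, hd m ∈ ps m := fun m => by rw [heq m]; simp
  have hmem : ∀ m, hd m ∈ S := fun m => (hps m).2.1 _ (hmemp m)
  have hinj : Function.Injective (fun m => (⟨hd m, hmem m⟩ : {e // e ∈ S})) := by
    intro m m' hmm
    by_contra hne
    have h2 := hdisj m m' hne _ (hmemp m)
    have h3 : hd m = hd m' := congrArg Subtype.val hmm
    rw [h3] at h2
    exact h2 (hmemp m')
  have := Fintype.card_le_of_injective _ hinj
  simpa using this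

lemma maxFlow_congr {S S' : Finset (V × V)} [DecidableEq V] {s t : V}
    (h : ∀ r, EDP S s t r ↔ EDP S' s t r) : maxFlow S s t = maxFlow S' s t := by
  unfold maxFlow
  congr 1
  ext r
  exact h r

end MoreParts

section Transfer
variable {lam u N : ℕ} {U ι : Type*} [Fintype U] [DecidableEq U] [Fintype ι] [DecidableEq ι]
variable (Sw : ι → Finset U) (elem : Fin (2 ^ u) ≃ U)

lemma target_sink_last {S : Finset (SCV lam u N U ι × SCV lam u N U ι)}
    (hsub : ∀ e ∈ S, e ∈ scGraph lam u N U ι Sw elem) :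
    ∀ (p : List (SCV lam u N U ι × SCV lam u N U ι)) (a t : SCV lam u N U ι),
      IsPath S a t p → ∀ e ∈ p, ∀ jj : Fin N, e.2 = sinkV jj → t = sinkV jj := by
  intro p
  induction p with
  | nil => intro a t _ e he; cases he
  | cons f rest ih =>
    intro a t hp e he jj hsnk
    rcases List.mem_cons.1 he with rfl | he'
    · cases rest with
      | nil =>
        have := hp.2.2.2.2
        simp only [List.getLast?_singleton, Option.map_some, Option.some.injEq] at this
        rw [← this, hsnk]
      | cons g rest' =>
        exfalso
        have hchain := hp.2.2.1
        have hg1 : g.1 = e.2 := ((List.isChain_cons_cons.1 hchain).1).symm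
        have hgG := hsub g (hp.2.1 g (by simp))
        rw [show g = (g.1, g.2) from rfl, hg1, hsnk] at hgG
        exact sink_no_out Sw elem hgG
    · have hne : rest ≠ [] := by rintro rfl; cases he'
      exact ih f.2 t (isPath_tail hp hne) e he' jj hsnk

lemma edp_transfer (Scov : Finset ι) (hScov : ∀ x : U, ∃ w ∈ Scov, x ∈ Sw w)
    (F : Finset (SCV lam u N U ι × SCV lam u N U ι)) (hF : F.card ≤ u + 1)
    (t : SCV lam u N U ι) (r : ℕ)
    (hE : EDP (scGraph lam u N U ι Sw elem \ F) (Sum.inl ()) t r) :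
    EDP (((scGraph lam u N U ι Sw elem).filter fun e =>
        (∃ j : Fin N, e.2 = sinkV j) →
          ((∃ i : Fin lam, ∃ w ∈ Scov, e.1 = yV i w) ∨
            (∃ i : Fin lam, ∃ c : Fin (u + 1), e.1 = zV i c))) \ F) (Sum.inl ()) t r := by
  classical
  obtain ⟨ps, hps, hdisj⟩ := hE
  have hsubG : ∀ e ∈ scGraph lam u N U ι Sw elem \ F, e ∈ scGraph lam u N U ι Sw elem :=
    fun e he => (Finset.mem_sdiff.1 he).1
  rcases Classical.em (∃ jj : Fin N, t = sinkV jj) with ⟨jj, rfl⟩ | hns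
  · -- t is a sink: reroute every path through its own component
    -- extract head component
    have hhead : ∀ m : Fin r, ∃ i : Fin lam,
        (ps m).head? = some ((Sum.inl (), nodeV i []) : _ × _) := by
      intro m
      obtain ⟨f, rest, heq⟩ := List.exists_cons_of_ne_nil (hps m).1
      have hf1 : f.1 = Sum.inl () := by
        have := (hps m).2.2.2.1
        rw [heq] at this
        simpa using this
      have hfG : f ∈ scGraph lam u N U ι Sw elem :=
        hsubG f ((hps m).2.1 f (by rw [heq]; simp))
      rw [show f = (f.1, f.2) from rfl, hf1] at hfG
      obtain ⟨i, hi⟩ := inv_from_src Sw elem hfG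
      refine ⟨i, ?_⟩
      rw [heq]
      simp only [List.head?_cons, Option.some.injEq]
      rw [show f = (f.1, f.2) from rfl, hf1, hi]
    choose iOf hiOf using hhead
    have hiInj : Function.Injective iOf := by
      intro m m' hmm
      by_contra hne
      have h1 : ((Sum.inl (), nodeV (iOf m) []) : _ × _) ∈ ps m := by
        have := hiOf m
        exact List.mem_of_mem_head? (by rw [this]; rfl)
      have h2 : ((Sum.inl (), nodeV (iOf m') []) : _ × _) ∈ ps m' := by
        have := hiOf m'
        exact List.mem_of_mem_head? (by rw [this]; rfl)
      rw [← hmm] at h2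
      exact hdisj m m' hne _ h1 h2
    -- for each path, find a reachable leaf in its component, then reroute via core
    have hq : ∀ m : Fin r, ∃ q, IsPath (((scGraph lam u N U ι Sw elem).filter fun e =>
        (∃ j : Fin N, e.2 = sinkV j) →
          ((∃ i : Fin lam, ∃ w ∈ Scov, e.1 = yV i w) ∨
            (∃ i : Fin lam, ∃ c : Fin (u + 1), e.1 = zV i c))) \ F)
        (srcV : SCV lam u N U ι) (sinkV jj) q ∧ ∀ e ∈ q, tagE e = some (iOf m) := by
      intro m
      obtain ⟨f, rest, heq⟩ := List.exists_cons_of_ne_nil (hps m).1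
      have hf : f = ((Sum.inl (), nodeV (iOf m) []) : _ × _) := by
        have := hiOf m
        rw [heq] at this
        simpa using this
      have hrne : rest ≠ [] := by
        rintro rfl
        have := (hps m).2.2.2.2
        rw [heq, hf] at this
        simp only [List.getLast?_singleton, Option.map_some, Option.some.injEq] at this
        exact absurd this.symm (by simp [nodeV, treeV, sinkV])
      have hrest : IsPath (scGraph lam u N U ι Sw elem \ F) f.2 (sinkV jj) rest :=
        isPath_tail (heq ▸ hps m) hrne
      -- apply exits_tree to rest
      obtain ⟨e, he, a', x, bb, hee⟩ := exits_tree Sw elem F rest (iOf m) (nodeFin []) jj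
        (fun e' he' => hsubG e' (hrest.2.1 e' he'))
        hrest.2.2.1
        (by
          have h1 := hrest.2.2.2.1
          rw [hf] at h1
          exact h1)
        hrest.2.2.2.2
      -- recover the leaf as a bit list
      have heG : e ∈ scGraph lam u N U ι Sw elem := hsubG e (hrest.2.1 e he)
      rw [hee] at heG
      obtain ⟨_, jx, hjx, hjxe⟩ := inv_leaf_xb Sw elem heG
      obtain ⟨l, hlen, hval⟩ := exists_list_valL u (jx : ℕ) jx.2
      have hnode : (nodeV (iOf m) l : SCV lam u N U ι) = treeV (iOf m) a' := by
        rw [nodeV]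
        congr 1
        apply Fin.ext
        rw [nodeFin_val (by omega), hjx]
        have h1 := nodeIdx_eq l
        have h2 : (1:ℕ) ≤ 2 ^ u := Nat.one_le_two_pow
        rw [hval] at h1
        rw [hlen] at h1
        omega
      have hreach : Reach (scGraph lam u N U ι Sw elem \ F) (srcV : SCV lam u N U ι)
          (nodeV (iOf m) l) := by
        rw [hnode]
        have := isPath_reach rest f.2 (sinkV jj) hrest e he
        rw [hee] at this
        refine Relation.ReflTransGen.head ?_ this
        have h1 : ((Sum.inl (), nodeV (iOf m) []) : _ × _)
            ∈ scGraph lam u N U ι Sw elem \ F := by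
          rw [← hf]
          exact (hps m).2.1 f (by rw [heq]; simp)
        rw [hf]
        exact h1
      exact core Sw elem Scov hScov F hF (iOf m) jj l hlen hreach
    choose qs hqs htags using hq
    refine ⟨qs, hqs, ?_⟩
    intro m m' hne e he hee
    have h1 := htags m e he
    have h2 := htags m' e hee
    rw [h1] at h2
    exact hne (hiInj (Option.some.inj h2))
  · -- t is not a sink: the very same paths avoid all sink in-edges
    refine ⟨ps, fun m => ?_, hdisj⟩
    refine ⟨(hps m).1, fun e he => ?_, (hps m).2.2.1, (hps m).2.2.2.1, (hps m).2.2.2.2⟩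
    have heGF := (hps m).2.1 e he
    rw [Finset.mem_sdiff] at heGF ⊢
    refine ⟨Finset.mem_filter.2 ⟨heGF.1, ?_⟩, heGF.2⟩
    rintro ⟨jj, hjj⟩
    exact absurd ⟨jj, target_sink_last Sw elem hsubG (ps m) _ t (hps m) e he jj hjj⟩ hns

end Transfer
end SC17
namespace SC17
set_option linter.unusedSectionVars false
section Deg
variable {lam u N : ℕ} {U ι : Type*} [Fintype U] [DecidableEq U] [Fintype ι] [DecidableEq ι]
variable (Sw : ι → Finset U) (elem : Fin (2 ^ u) ≃ U)

lemma indeg_count (Scov : Finset ι) (j : Fin N) :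
    (inEdges ((scGraph lam u N U ι Sw elem).filter fun e =>
      (∃ j : Fin N, e.2 = sinkV j) →
        ((∃ i : Fin lam, ∃ w ∈ Scov, e.1 = yV i w) ∨
          (∃ i : Fin lam, ∃ c : Fin (u + 1), e.1 = zV i c))) (sinkV j)).card
      = lam * (Scov.card + (u+1)) := by
  classical
  have hset : inEdges ((scGraph lam u N U ι Sw elem).filter fun e =>
      (∃ j : Fin N, e.2 = sinkV j) →
        ((∃ i : Fin lam, ∃ w ∈ Scov, e.1 = yV i w) ∨
          (∃ i : Fin lam, ∃ c : Fin (u + 1), e.1 = zV i c))) (sinkV j) =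
      ((Finset.univ : Finset (Fin lam)) ×ˢ Scov).image
        (fun p => ((yV p.1 p.2 : SCV lam u N U ι), sinkV j))
      ∪ (Finset.univ : Finset (Fin lam × Fin (u+1))).image
        (fun p => ((zV p.1 p.2 : SCV lam u N U ι), sinkV j)) := by
    ext e
    constructor
    · intro he
      rw [inEdges, Finset.mem_filter, Finset.mem_filter] at he
      obtain ⟨⟨heG, hcond⟩, hsnk⟩ := he
      have he2 : e = (e.1, sinkV j) := by rw [← hsnk]
      rcases hcond ⟨j, hsnk⟩ with ⟨i, w, hw, he1⟩ | ⟨i, c, he1⟩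
      · refine Finset.mem_union_left _ (Finset.mem_image.2 ⟨(i, w), ?_, ?_⟩)
        · rw [Finset.mem_product]; exact ⟨Finset.mem_univ _, hw⟩
        · rw [← he1, ← hsnk]
      · refine Finset.mem_union_right _ (Finset.mem_image.2 ⟨(i, c), Finset.mem_univ _, ?_⟩)
        rw [← he1, ← hsnk]
    · intro he
      rw [inEdges, Finset.mem_filter, Finset.mem_filter]
      rcases Finset.mem_union.1 he with h1 | h1
      · obtain ⟨⟨i, w⟩, hmem, rfl⟩ := Finset.mem_image.1 h1
        rw [Finset.mem_product] at hmem
        exact ⟨⟨y_sink_mem Sw elem i w j, fun _ => Or.inl ⟨i, w, hmem.2, rfl⟩⟩, rfl⟩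
      · obtain ⟨⟨i, c⟩, _, rfl⟩ := Finset.mem_image.1 h1
        exact ⟨⟨z_sink_mem Sw elem i c j, fun _ => Or.inr ⟨i, c, rfl⟩⟩, rfl⟩
  rw [hset]
  have hdisj : Disjoint (((Finset.univ : Finset (Fin lam)) ×ˢ Scov).image
        (fun p => ((yV p.1 p.2 : SCV lam u N U ι), (sinkV j : SCV lam u N U ι))))
      ((Finset.univ : Finset (Fin lam × Fin (u+1))).image
        (fun p => ((zV p.1 p.2 : SCV lam u N U ι), (sinkV j : SCV lam u N U ι)))) := by
    rw [Finset.disjoint_left]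
    rintro e he1 he2
    obtain ⟨p, _, rfl⟩ := Finset.mem_image.1 he1
    obtain ⟨p', _, hcon⟩ := Finset.mem_image.1 he2
    simp [yV, zV, Prod.ext_iff] at hcon
  have hinj1 : Function.Injective
      (fun p : Fin lam × ι => ((yV p.1 p.2 : SCV lam u N U ι), (sinkV j : SCV lam u N U ι))) := by
    intro p p' h
    simpa [yV, Prod.ext_iff] using h
  have hinj2 : Function.Injective
      (fun p : Fin lam × Fin (u+1) =>
        ((zV p.1 p.2 : SCV lam u N U ι), (sinkV j : SCV lam u N U ι))) := by
    intro p p' h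
    simpa [zV, Prod.ext_iff] using h
  rw [Finset.card_union_of_disjoint hdisj,
    Finset.card_image_of_injective _ hinj1,
    Finset.card_image_of_injective _ hinj2]
  simp only [Finset.card_product, Finset.card_univ, Fintype.card_fin, Fintype.card_prod]
  ring

end Deg
end SC17

/-- any set cover `Scov` of `(U, 𝔉)` yields a `(lam, u+1)`-FT-BFP `H`
of the set-cover reduction graph, obtained by restricting the in-edges of every sink
`v_j` to those coming from `A = ⋃_i ({y_{i,W} : W ∈ Scov} ∪ Z_i)`; in `H` every sink
has in-degree exactly `lam * (|Scov| + (u+1))` (note `k = u + 1`). -/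
theorem stmt_17 (lam u N : ℕ) (hlam : 1 ≤ lam) (hN : 1 ≤ N)
    {U ι : Type*} [Fintype U] [DecidableEq U] [Fintype ι] [DecidableEq ι]
    (Sw : ι → Finset U) (elem : Fin (2 ^ u) ≃ U)
    (hcov : ∀ x : U, ∃ w : ι, x ∈ Sw w)
    (Scov : Finset ι)
    (hScov : ∀ x : U, ∃ w ∈ Scov, x ∈ Sw w)
    (H : Finset (SCV lam u N U ι × SCV lam u N U ι))
    (hH : H = (scGraph lam u N U ι Sw elem).filter fun e =>
      (∃ j : Fin N, e.2 = sinkV j) →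
        ((∃ i : Fin lam, ∃ w ∈ Scov, e.1 = yV i w) ∨
          (∃ i : Fin lam, ∃ c : Fin (u + 1), e.1 = zV i c))) :
    IsFTBFP (scGraph lam u N U ι Sw elem) H (Sum.inl ()) lam (u + 1) ∧
    ∀ j : Fin N, (inEdges H (sinkV j)).card = lam * (Scov.card + (u + 1)) := by
  subst hH
  constructor
  · refine ⟨Finset.filter_subset _ _, ?_⟩
    intro F hF t
    have hiff : ∀ r, EDP (((scGraph lam u N U ι Sw elem).filter fun e =>
        (∃ j : Fin N, e.2 = sinkV j) →
          ((∃ i : Fin lam, ∃ w ∈ Scov, e.1 = yV i w) ∨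
            (∃ i : Fin lam, ∃ c : Fin (u + 1), e.1 = zV i c))) \ F) (Sum.inl ()) t r ↔
        EDP (scGraph lam u N U ι Sw elem \ F) (Sum.inl ()) t r := by
      intro r
      constructor
      · exact SC17.edp_mono
          (Finset.sdiff_subset_sdiff (Finset.filter_subset _ _) (Finset.Subset.refl F))
      · exact fun h => SC17.edp_transfer Sw elem Scov hScov F hF t r h
    have heq := SC17.maxFlow_congr hiff
    constructor
    · intro _
      convert heq using 2 <;> (ext e; simp [Finset.mem_sdiff])
    · intro hlt
      have h6 : lam < maxFlow (scGraph lam u N U ι Sw elem \ F) (Sum.inl ()) t := by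
        convert hlt using 2
      have h5 : lam ≤ maxFlow (((scGraph lam u N U ι Sw elem).filter fun e =>
          (∃ j : Fin N, e.2 = sinkV j) →
            ((∃ i : Fin lam, ∃ w ∈ Scov, e.1 = yV i w) ∨
              (∃ i : Fin lam, ∃ c : Fin (u + 1), e.1 = zV i c))) \ F) (Sum.inl ()) t := by
        rw [heq]; exact h6.le
      convert h5 using 2
  · intro j
    exact SC17.indeg_count Sw elem Scov j
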